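/- Let S be a finite set, δ ∈ [0,1], and let {φ_σ}_{σ∈S} be unit vectors in ℂ² such that |⟨φ_α, φ_β⟩| ≤ δ for all α ≠ β. Then the controlled-SWAP test fingerprinting scheme with these fingerprints has one-sided error with error probability at most (1 + δ²)/2: on matching inputs the acceptance probability 1 − (1/4)‖φ_σ ⊗ φ_σ − φ_σ ⊗ φ_σ‖² equals 1, and on any input (α,β) with α ≠ β the acceptance probability 1 − (1/4)‖φ_α ⊗ φ_β − φ_β ⊗ φ_α‖² equals (1 + |⟨φ_α, φ_β⟩|²)/2, which is at most (1 + δ²)/2. -/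

import Mathlib

open scoped InnerProductSpace

noncomputable def tens (f g : EuclideanSpace ℂ (Fin 2)) :
    EuclideanSpace ℂ (Fin 2 × Fin 2) :=
  (WithLp.equiv 2 (Fin 2 × Fin 2 → ℂ)).symm (fun ij => f ij.1 * g ij.2)

lemma tens_inner (a b c d : EuclideanSpace ℂ (Fin 2)) :
    ⟪tens a b, tens c d⟫_ℂ = ⟪a, c⟫_ℂ * ⟪b, d⟫_ℂ := by
  have h : ∀ (f g : EuclideanSpace ℂ (Fin 2)) (ij : Fin 2 × Fin 2),
      (tens f g) ij = f ij.1 * g ij.2 := fun _ _ _ => rfl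
  simp only [PiLp.inner_apply, h, Fintype.sum_prod_type, Fin.sum_univ_two, RCLike.inner_apply, map_mul]
  ring

lemma tens_key (a b : EuclideanSpace ℂ (Fin 2)) (ha : ‖a‖ = 1) (hb : ‖b‖ = 1) :
    ‖tens a b - tens b a‖ ^ 2 = 2 - 2 * ‖⟪a, b⟫_ℂ‖ ^ 2 := by
  have h1 : ⟪a, a⟫_ℂ = 1 := by
    rw [inner_self_eq_norm_sq_to_K, ha]; norm_num
  have h2 : ⟪b, b⟫_ℂ = 1 := by
    rw [inner_self_eq_norm_sq_to_K, hb]; norm_num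
  have hx : ‖tens a b‖ ^ 2 = 1 := by
    rw [@norm_sq_eq_re_inner ℂ, tens_inner, h1, h2]; simp
  have hy : ‖tens b a‖ ^ 2 = 1 := by
    rw [@norm_sq_eq_re_inner ℂ, tens_inner, h1, h2]; simp
  have hre : RCLike.re ⟪tens a b, tens b a⟫_ℂ = ‖⟪a, b⟫_ℂ‖ ^ 2 := by
    rw [tens_inner, ← inner_conj_symm b a, Complex.mul_conj]
    simp [Complex.normSq_eq_norm_sq]
    norm_cast
  rw [@norm_sub_sq ℂ, hx, hy, hre]; ring

theorem cswap_scheme_one_sided_error {S : Type*} [Fintype S]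
    (δ : ℝ) (hδ : δ ∈ Set.Icc (0 : ℝ) 1)
    (φ : S → EuclideanSpace ℂ (Fin 2)) (hunit : ∀ σ, ‖φ σ‖ = 1)
    (hsep : ∀ α β : S, α ≠ β → ‖⟪φ α, φ β⟫_ℂ‖ ≤ δ) :
    (∀ σ : S, 1 - (1 / 4) * ‖tens (φ σ) (φ σ) - tens (φ σ) (φ σ)‖ ^ 2 = 1) ∧
    (∀ α β : S, α ≠ β →
      1 - (1 / 4) * ‖tens (φ α) (φ β) - tens (φ β) (φ α)‖ ^ 2
          = (1 + ‖⟪φ α, φ β⟫_ℂ‖ ^ 2) / 2 ∧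
      1 - (1 / 4) * ‖tens (φ α) (φ β) - tens (φ β) (φ α)‖ ^ 2 ≤ (1 + δ ^ 2) / 2) := by
  refine ⟨fun σ => by simp, fun α β hne => ?_⟩
  have hk := tens_key (φ α) (φ β) (hunit α) (hunit β)
  have heq : 1 - (1 / 4) * ‖tens (φ α) (φ β) - tens (φ β) (φ α)‖ ^ 2
      = (1 + ‖⟪φ α, φ β⟫_ℂ‖ ^ 2) / 2 := by rw [hk]; ring
  refine ⟨heq, ?_⟩
  rw [heq]
  have h := hsep α β hne
  have h2 : ‖⟪φ α, φ β⟫_ℂ‖ ^ 2 ≤ δ ^ 2 :=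
    pow_le_pow_left₀ (norm_nonneg _) h 2
  linarith
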